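/- arXiv:1406.3449 — 2 statements merged into one kernel-verified Lean document; each statement's English description precedes it below -/
import Mathlib

section
/- Let f : Ω₁ → Ω₂ be a proper holomorphic map of degree m between bounded domains in ℂⁿ with complex Jacobian u = det[∂f_i/∂z_j]. Then for every measurable ψ : Ω₂ → ℂ, the function u·(ψ∘f) lies in L²(Ω₁) if and only if ψ ∈ L²(Ω₂), and in that case ‖u·(ψ∘f)‖²_{L²(Ω₁)} = m · ‖ψ‖²_{L²(Ω₂)}. -/
open MeasureTheory

/-- Partial derivative `∂/∂z_j` of a function of several complex variables. -/
noncomputable def pderivC {n : ℕ} (j : Fin n) (f : (Fin n → ℂ) → ℂ) :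
    (Fin n → ℂ) → ℂ :=
  fun z => deriv (fun w => f (Function.update z j w)) (z j)

/-- The complex Jacobian determinant `u = det [∂f_i/∂z_j]` of a holomorphic map. -/
noncomputable def jacDet {n : ℕ} (f : (Fin n → ℂ) → (Fin n → ℂ)) (z : Fin n → ℂ) : ℂ :=
  (Matrix.of fun i j : Fin n => pderivC j (fun w => f w i) z).det


open Metric

/-- The complex Fréchet derivative of a holomorphic map on an open set is continuous there. -/
lemma aux_fderiv_continuousOn {n : ℕ} {f : (Fin n → ℂ) → (Fin n → ℂ)} {Ω : Set (Fin n → ℂ)}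
    (hΩ : IsOpen Ω) (hf : DifferentiableOn ℂ f Ω) :
    ContinuousOn (fun z => fderiv ℂ f z) Ω := by
  intro p hp
  apply ContinuousAt.continuousWithinAt
  obtain ⟨R, hR0, hRsub⟩ : ∃ R > 0, closedBall p R ⊆ Ω := by
    rcases Metric.isOpen_iff.1 hΩ p hp with ⟨ε, hε, hsub⟩
    exact ⟨ε / 2, by positivity, (closedBall_subset_ball (by linarith)).trans hsub⟩
  set r := R / 3 with hrdef
  have hr0 : 0 < r := by positivity
  have hUC : UniformContinuousOn f (closedBall p R) :=
    (isCompact_closedBall p R).uniformContinuousOn_of_continuous (hf.continuousOn.mono hRsub)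
  rw [Metric.continuousAt_iff]
  intro ε hε
  obtain ⟨δ, hδ0, hδ⟩ := Metric.uniformContinuousOn_iff.1 hUC (ε / 2 * r) (by positivity)
  refine ⟨min δ r, lt_min hδ0 hr0, fun {z} hz => ?_⟩
  have hzd : dist z p < δ := lt_of_lt_of_le hz (min_le_left _ _)
  have hzr : dist z p < r := lt_of_lt_of_le hz (min_le_right _ _)
  have hmem : ∀ q : Fin n → ℂ, dist q p ≤ r → ∀ v : Fin n → ℂ, ‖v‖ ≤ 1 → ∀ t : ℂ, ‖t‖ ≤ r →
      q + t • v ∈ closedBall p R := by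
    intro q hq v hv t ht
    rw [mem_closedBall]
    have h1 : dist (q + t • v) q = ‖t • v‖ := by
      rw [dist_eq_norm]; simp
    have h2 : ‖t • v‖ ≤ r := by
      rw [norm_smul]
      calc ‖t‖ * ‖v‖ ≤ r * 1 := by
            apply mul_le_mul ht hv (norm_nonneg _) hr0.le
        _ = r := mul_one r
    calc dist (q + t • v) p ≤ dist (q + t • v) q + dist q p := dist_triangle _ _ _
      _ ≤ r + r := by rw [h1]; exact add_le_add h2 hq
      _ ≤ R := by rw [hrdef]; linarith
  have hzΩ : z ∈ Ω := hRsub (by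
    rw [mem_closedBall]
    calc dist z p ≤ r := hzr.le
      _ ≤ R := by rw [hrdef]; linarith)
  have key : ∀ v : Fin n → ℂ, ‖v‖ ≤ 1 →
      ‖fderiv ℂ f z v - fderiv ℂ f p v‖ ≤ ε / 2 := by
    intro v hv
    set g : ℂ → (Fin n → ℂ) := fun t => f (z + t • v) - f (p + t • v) with hg
    have hgd : DifferentiableOn ℂ g (closedBall 0 r) := by
      intro t ht
      rw [mem_closedBall_zero_iff] at ht
      have ha : DifferentiableAt ℂ (fun t : ℂ => z + t • v) t :=
        (differentiableAt_id.smul_const v).const_add z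
      have hb : DifferentiableAt ℂ (fun t : ℂ => p + t • v) t :=
        (differentiableAt_id.smul_const v).const_add p
      have h1 : DifferentiableAt ℂ (fun t : ℂ => f (z + t • v)) t :=
        (hf.differentiableAt (hΩ.mem_nhds (hRsub (hmem z hzr.le v hv t ht)))).comp t ha
      have h2 : DifferentiableAt ℂ (fun t : ℂ => f (p + t • v)) t :=
        (hf.differentiableAt (hΩ.mem_nhds (hRsub (hmem p (by simp [hr0.le]) v hv t ht)))).comp t hb
      exact (h1.sub h2).differentiableWithinAt
    have hdcc : DiffContOnCl ℂ g (ball 0 r) :=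
      DifferentiableOn.diffContOnCl (by rwa [closure_ball (0 : ℂ) hr0.ne'])
    have hbound : ∀ t ∈ sphere (0 : ℂ) r, ‖g t‖ ≤ ε / 2 * r := by
      intro t ht
      rw [mem_sphere_zero_iff_norm] at ht
      have hx : z + t • v ∈ closedBall p R := hmem z hzr.le v hv t ht.le
      have hy : p + t • v ∈ closedBall p R := hmem p (by simp [hr0.le]) v hv t ht.le
      have hdd : dist (z + t • v) (p + t • v) < δ := by
        rw [dist_add_right]; exact hzd
      have := hδ _ hx _ hy hdd
      rw [dist_eq_norm] at this
      exact this.le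
    have hderiv := Complex.norm_deriv_le_of_forall_mem_sphere_norm_le hr0 hdcc hbound
    have h1 : HasDerivAt (fun t : ℂ => f (z + t • v)) (fderiv ℂ f z v) 0 := by
      have ha : HasDerivAt (fun t : ℂ => z + t • v) v 0 := by
        simpa using ((hasDerivAt_id (0 : ℂ)).smul_const v).const_add z
      have hb : HasFDerivAt f (fderiv ℂ f z) (z + (0 : ℂ) • v) := by
        simpa using (hf.differentiableAt (hΩ.mem_nhds hzΩ)).hasFDerivAt
      exact hb.comp_hasDerivAt 0 ha
    have h2 : HasDerivAt (fun t : ℂ => f (p + t • v)) (fderiv ℂ f p v) 0 := by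
      have ha : HasDerivAt (fun t : ℂ => p + t • v) v 0 := by
        simpa using ((hasDerivAt_id (0 : ℂ)).smul_const v).const_add p
      have hb : HasFDerivAt f (fderiv ℂ f p) (p + (0 : ℂ) • v) := by
        simpa using (hf.differentiableAt (hΩ.mem_nhds hp)).hasFDerivAt
      exact hb.comp_hasDerivAt 0 ha
    have hderiv0 : deriv g 0 = fderiv ℂ f z v - fderiv ℂ f p v := (h1.sub h2).deriv
    rw [hderiv0] at hderiv
    calc ‖fderiv ℂ f z v - fderiv ℂ f p v‖ ≤ ε / 2 * r / r := hderiv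
      _ = ε / 2 := by field_simp
  rw [dist_eq_norm]
  have hle : ‖fderiv ℂ f z - fderiv ℂ f p‖ ≤ ε / 2 := by
    apply ContinuousLinearMap.opNorm_le_bound _ (by positivity)
    intro v
    rcases eq_or_ne v 0 with rfl | hv
    · simp
    · have hnv : (0 : ℝ) < ‖v‖ := norm_pos_iff.2 hv
      have hv' : ‖((‖v‖ : ℂ)⁻¹ • v : Fin n → ℂ)‖ ≤ 1 := by
        rw [norm_smul, norm_inv, Complex.norm_real, norm_norm,
          inv_mul_cancel₀ hnv.ne']
      have hk := key _ hv'
      have heq : fderiv ℂ f z ((‖v‖ : ℂ)⁻¹ • v) - fderiv ℂ f p ((‖v‖ : ℂ)⁻¹ • v)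
          = (‖v‖ : ℂ)⁻¹ • (fderiv ℂ f z v - fderiv ℂ f p v) := by
        rw [ContinuousLinearMap.map_smul, ContinuousLinearMap.map_smul, smul_sub]
      rw [heq, norm_smul, norm_inv, Complex.norm_real, norm_norm] at hk
      rw [ContinuousLinearMap.sub_apply]
      calc ‖fderiv ℂ f z v - fderiv ℂ f p v‖
          = ‖v‖ * (‖v‖⁻¹ * ‖fderiv ℂ f z v - fderiv ℂ f p v‖) := by
            field_simp
        _ ≤ ‖v‖ * (ε / 2) := by
            apply mul_le_mul_of_nonneg_left hk (norm_nonneg v)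
        _ = ε / 2 * ‖v‖ := by ring
  linarith

lemma aux_jacDet_eq {n : ℕ} {f : (Fin n → ℂ) → (Fin n → ℂ)} {Ω : Set (Fin n → ℂ)}
    (hΩ : IsOpen Ω) (hf : DifferentiableOn ℂ f Ω) {z : Fin n → ℂ} (hz : z ∈ Ω) :
    jacDet f z = (Matrix.of fun i j : Fin n => fderiv ℂ f z (Pi.single j 1) i).det := by
  unfold jacDet pderivC
  congr 1
  funext i j
  simp only [Matrix.of_apply]
  have hupd : ∀ w : ℂ, Function.update z j w = z + (w - z j) • (Pi.single j 1 : Fin n → ℂ) := by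
    intro w; funext k
    rcases eq_or_ne k j with rfl | hkj
    · simp
    · simp [Function.update_of_ne hkj, Pi.single_eq_of_ne hkj]
  have ha : HasDerivAt (fun w : ℂ => z + (w - z j) • (Pi.single j 1 : Fin n → ℂ))
      (Pi.single j 1) (z j) := by
    simpa using (((hasDerivAt_id (z j)).sub_const (z j)).smul_const ((Pi.single j 1 : Fin n → ℂ))).const_add z
  have hb : HasFDerivAt f (fderiv ℂ f z) (z + ((z j) - z j) • (Pi.single j 1 : Fin n → ℂ)) := by
    simpa using (hf.differentiableAt (hΩ.mem_nhds hz)).hasFDerivAt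
  have hc : HasDerivAt (fun w => f (Function.update z j w)) (fderiv ℂ f z (Pi.single j 1)) (z j) := by
    simp only [hupd]
    exact hb.comp_hasDerivAt (z j) ha
  have hd : HasDerivAt (fun w => f (Function.update z j w) i)
      ((fderiv ℂ f z (Pi.single j 1)) i) (z j) := by
    exact (ContinuousLinearMap.proj (R := ℂ) (φ := fun _ : Fin n => ℂ) i).hasFDerivAt.comp_hasDerivAt (z j) hc
  exact hd.deriv

lemma aux_jacDet_continuousOn {n : ℕ} {f : (Fin n → ℂ) → (Fin n → ℂ)} {Ω : Set (Fin n → ℂ)}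
    (hΩ : IsOpen Ω) (hf : DifferentiableOn ℂ f Ω) (hfc : ContinuousOn (fun z => fderiv ℂ f z) Ω) :
    ContinuousOn (jacDet f) Ω := by
  have hcont : Continuous (fun L : (Fin n → ℂ) →L[ℂ] (Fin n → ℂ) =>
      (Matrix.of fun i j : Fin n => L (Pi.single j 1) i).det) := by
    apply Continuous.matrix_det
    apply continuous_pi; intro i; apply continuous_pi; intro j
    exact (continuous_apply i).comp (ContinuousLinearMap.apply ℂ (Fin n → ℂ) (Pi.single j 1)).continuous
  exact ContinuousOn.congr (hcont.comp_continuousOn hfc) (fun z hz => aux_jacDet_eq hΩ hf hz)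

/-- The key change-of-variables ("area formula") identity. -/
lemma aux_key {n m : ℕ} (Ω₁ Ω₂ : Set (Fin n → ℂ))
    (hΩ₁o : IsOpen Ω₁) (hΩ₂o : IsOpen Ω₂) (hΩ₂c : IsConnected Ω₂)
    (f : (Fin n → ℂ) → (Fin n → ℂ))
    (hf : DifferentiableOn ℂ f Ω₁)
    (hproper : ∀ L : Set (Fin n → ℂ), L ⊆ Ω₂ → IsCompact L → IsCompact (Ω₁ ∩ f ⁻¹' L))
    -- the critical set `E = {u = 0}` and its image have measure zero
    (E : Set (Fin n → ℂ)) (hE : E = {z ∈ Ω₁ | jacDet f z = 0})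
    (hE0 : volume E = 0) (hfE0 : volume (f '' E) = 0)
    (hcount : ∀ w ∈ Ω₂ \ f '' E, ((Ω₁ \ E) ∩ f ⁻¹' {w}).ncard = m)
    (honto : f '' (Ω₁ \ E) = Ω₂ \ f '' E)
    (hjac : ∀ z ∈ Ω₁, LinearMap.det ((fderiv ℝ f z).toLinearMap) = ‖jacDet f z‖ ^ 2) :
    1 ≤ m ∧ ∀ g : (Fin n → ℂ) → ENNReal, Measurable g →
      ∫⁻ z in Ω₁, (‖jacDet f z‖₊ : ENNReal) ^ 2 * g (f z) = m * ∫⁻ w in Ω₂, g w := by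
  classical
  set V : Set (Fin n → ℂ) := Ω₁ \ E with hV
  set W : Set (Fin n → ℂ) := Ω₂ \ f '' E with hW
  have hfderiv_cont := aux_fderiv_continuousOn hΩ₁o hf
  have hucont : ContinuousOn (jacDet f) Ω₁ := aux_jacDet_continuousOn hΩ₁o hf hfderiv_cont
  have hVopen : IsOpen V := by
    have hVeq : V = Ω₁ ∩ (jacDet f) ⁻¹' ({0}ᶜ) := by
      ext z; simp only [hV, hE, Set.mem_diff, Set.mem_setOf_eq, Set.mem_inter_iff,
        Set.mem_preimage, Set.mem_compl_iff, Set.mem_singleton_iff]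
      tauto
    rw [hVeq]
    exact hucont.isOpen_inter_preimage hΩ₁o isOpen_compl_singleton
  -- nonemptiness
  have hpos₂ : 0 < volume Ω₂ := hΩ₂o.measure_pos volume hΩ₂c.nonempty
  have hWne : W.Nonempty := by
    rcases W.eq_empty_or_nonempty with hWe | h
    · exfalso
      have : Ω₂ ⊆ f '' E := Set.diff_eq_empty.mp hWe
      exact absurd (le_antisymm (le_trans (measure_mono this) (le_of_eq hfE0)) zero_le)
        hpos₂.ne'
    · exact h
  have hVne : V.Nonempty := by
    obtain ⟨w, hw⟩ := hWne
    rw [← honto] at hw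
    obtain ⟨z, hz, _⟩ := hw
    exact ⟨z, hz⟩
  -- local injectivity
  have hloc : ∀ p : V, ∃ O : Set (Fin n → ℂ),
      IsOpen O ∧ (p : Fin n → ℂ) ∈ O ∧ O ⊆ V ∧ Set.InjOn f O := by
    rintro ⟨p, hpV⟩
    have hpΩ : p ∈ Ω₁ := hpV.1
    have hder : ∀ᶠ y in nhds p, HasFDerivAt f ((fderiv ℂ f y).restrictScalars ℝ) y := by
      filter_upwards [hΩ₁o.mem_nhds hpΩ] with y hy
      exact ((hf.differentiableAt (hΩ₁o.mem_nhds hy)).hasFDerivAt).restrictScalars ℝ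
    have hcontat : ContinuousAt (fun y => (fderiv ℂ f y).restrictScalars ℝ) p := by
      have h1 : ContinuousAt (fun y => fderiv ℂ f y) p :=
        hfderiv_cont.continuousAt (hΩ₁o.mem_nhds hpΩ)
      exact ((ContinuousLinearMap.restrictScalarsIsometry ℂ (Fin n → ℂ) (Fin n → ℂ)
        ℝ ℝ).continuous.continuousAt).comp h1
    have hstrict : HasStrictFDerivAt f ((fderiv ℂ f p).restrictScalars ℝ) p :=
      hasStrictFDerivAt_of_hasFDerivAt_of_continuousAt hder hcontat
    have hBeq : (fderiv ℂ f p).restrictScalars ℝ = fderiv ℝ f p :=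
      (((hf.differentiableAt (hΩ₁o.mem_nhds hpΩ)).hasFDerivAt).restrictScalars ℝ).fderiv.symm
    have hup : jacDet f p ≠ 0 := fun h => hpV.2 (by rw [hE]; exact ⟨hpΩ, h⟩)
    have hdet : ((fderiv ℂ f p).restrictScalars ℝ).det ≠ 0 := by
      rw [hBeq]
      show LinearMap.det ((fderiv ℝ f p).toLinearMap) ≠ 0
      rw [hjac p hpΩ]
      exact pow_ne_zero 2 (norm_ne_zero_iff.2 hup)
    set eB := ((fderiv ℂ f p).restrictScalars ℝ).toContinuousLinearEquivOfDetNeZero hdet with heB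
    have hstrict' : HasStrictFDerivAt f (eB : (Fin n → ℂ) →L[ℝ] (Fin n → ℂ)) p := by
      rw [heB, ContinuousLinearMap.coe_toContinuousLinearEquivOfDetNeZero]
      exact hstrict
    set H := hstrict'.toOpenPartialHomeomorph f with hH
    have hinj : Set.InjOn f H.source := by
      have h := H.injOn
      rwa [hH, hstrict'.toOpenPartialHomeomorph_coe] at h
    exact ⟨H.source ∩ V, H.open_source.inter hVopen,
      ⟨hstrict'.mem_toOpenPartialHomeomorph_source, hpV⟩, Set.inter_subset_right,
      hinj.mono Set.inter_subset_left⟩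
  choose O hOopen hOmem hOsub hOinj using hloc
  obtain ⟨T, hTc, hTU⟩ := TopologicalSpace.isOpen_iUnion_countable O hOopen
  have hUV : ⋃ i, O i = V := by
    apply subset_antisymm (Set.iUnion_subset fun i => hOsub i)
    intro z hz
    exact Set.mem_iUnion.2 ⟨⟨z, hz⟩, hOmem ⟨z, hz⟩⟩
  have hTne : T.Nonempty := by
    rcases T.eq_empty_or_nonempty with rfl | h
    · exfalso
      obtain ⟨z, hz⟩ := hVne
      rw [← hUV, ← hTU] at hz
      simpa using hz
    · exact h
  obtain ⟨e, hTe⟩ := hTc.exists_eq_range hTne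
  set U : ℕ → Set (Fin n → ℂ) := fun k => O (e k) with hU
  have hUopen : ∀ k, IsOpen (U k) := fun k => hOopen _
  have hUinj : ∀ k, Set.InjOn f (U k) := fun k => hOinj _
  have hUsubV : ∀ k, U k ⊆ V := fun k => hOsub _
  have hUV' : ⋃ k, U k = V := by
    rw [← hUV, ← hTU, hTe]
    exact (Set.biUnion_range (f := e) (g := O)).symm
  set D : ℕ → Set (Fin n → ℂ) := disjointed U with hD
  have hDm : ∀ k, MeasurableSet (D k) :=
    MeasurableSet.disjointed (fun k => (hUopen k).measurableSet)
  have hDdisj : Pairwise (Function.onFun Disjoint D) := disjoint_disjointed U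
  have hDsub : ∀ k, D k ⊆ U k := disjointed_subset U
  have hDV : ⋃ k, D k = V := by rw [hD, iUnion_disjointed]; exact hUV'
  have hDΩ : ∀ k, D k ⊆ Ω₁ := fun k => (hDsub k).trans ((hUsubV k).trans Set.diff_subset)
  have hDf' : ∀ k, ∀ x ∈ D k, HasFDerivWithinAt f (fderiv ℝ f x) (D k) x := fun k x hx =>
    ((hf.differentiableAt (hΩ₁o.mem_nhds (hDΩ k hx))).restrictScalars ℝ).hasFDerivAt.hasFDerivWithinAt
  have hDinj : ∀ k, Set.InjOn f (D k) := fun k => (hUinj k).mono (hDsub k)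
  have hfDm : ∀ k, MeasurableSet (f '' D k) := fun k =>
    measurable_image_of_fderivWithin (hDm k) (hDf' k) (hDinj k)
  have hexists : ∀ z ∈ V, ∃ k, z ∈ D k := fun z hz => Set.mem_iUnion.1 (hDV ▸ hz)
  -- fibers over points of W are finite
  have hKV : ∀ w ∈ W, Ω₁ ∩ f ⁻¹' {w} ⊆ V := by
    rintro w hw z ⟨hz1, hz2⟩
    refine ⟨hz1, fun hzE => hw.2 ⟨z, hzE, ?_⟩⟩
    simpa using hz2
  have hFfin : ∀ w ∈ W, (V ∩ f ⁻¹' {w}).Finite := by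
    intro w hw
    have hK : IsCompact (Ω₁ ∩ f ⁻¹' {w}) :=
      hproper {w} (by simpa using hw.1) isCompact_singleton
    have hsub : Ω₁ ∩ f ⁻¹' {w} ⊆ ⋃ k, U k := by
      rw [hUV']; exact hKV w hw
    obtain ⟨t, ht⟩ := hK.elim_finite_subcover U hUopen hsub
    have hVF : V ∩ f ⁻¹' {w} ⊆ ⋃ k ∈ t, (U k ∩ f ⁻¹' {w}) := by
      intro z hz
      have hzt : z ∈ ⋃ k ∈ t, U k := ht ⟨hz.1.1, hz.2⟩
      obtain ⟨k, hk, hzk⟩ := Set.mem_iUnion₂.1 hzt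
      exact Set.mem_iUnion₂.2 ⟨k, hk, hzk, hz.2⟩
    refine Set.Finite.subset (Set.Finite.biUnion t.finite_toSet (fun k _ => ?_)) hVF
    apply Set.Subsingleton.finite
    intro a ha b hb
    apply hUinj k ha.1 hb.1
    have ha2 : f a = w := ha.2
    have hb2 : f b = w := hb.2
    rw [ha2, hb2]
  -- `m ≥ 1`
  have hm1 : 1 ≤ m := by
    obtain ⟨w, hw⟩ := hWne
    have hFne : (V ∩ f ⁻¹' {w}).Nonempty := by
      have hw' := hw
      rw [← honto] at hw'
      obtain ⟨z, hzV, hfz⟩ := hw'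
      exact ⟨z, hzV, by simpa using hfz⟩
    have hpos := (Set.ncard_pos (hFfin w hw)).2 hFne
    rw [hcount w hw] at hpos
    exact hpos
  refine ⟨hm1, fun g hg => ?_⟩
  -- the pointwise counting identity
  have hsum : ∀ w, ∑' k, (f '' D k).indicator g w
      = W.indicator (fun w => (m : ENNReal) * g w) w := by
    intro w
    by_cases hw : w ∈ W
    · rw [Set.indicator_of_mem hw]
      set S : Set ℕ := {k | w ∈ f '' D k} with hS
      set σ : (Fin n → ℂ) → ℕ := fun z => if h : ∃ k, z ∈ D k then h.choose else 0 with hσ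
      have hσmem : ∀ z ∈ V, z ∈ D (σ z) := by
        intro z hz
        have h : ∃ k, z ∈ D k := hexists z hz
        simp only [hσ, dif_pos h]
        exact h.choose_spec
      have hσinj : Set.InjOn σ (V ∩ f ⁻¹' {w}) := by
        intro a ha b hb hab
        apply hDinj (σ b) (hab ▸ hσmem a ha.1) (hσmem b hb.1)
        have ha2 : f a = w := ha.2
        have hb2 : f b = w := hb.2
        rw [ha2, hb2]
      have hσim : σ '' (V ∩ f ⁻¹' {w}) = S := by
        apply subset_antisymm
        · rintro _ ⟨z, hz, rfl⟩
          exact ⟨z, hσmem z hz.1, hz.2⟩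
        · rintro k ⟨z, hzD, hfz⟩
          have hzV : z ∈ V := by
            rw [← hDV]; exact Set.mem_iUnion.2 ⟨k, hzD⟩
          have hσz : σ z = k := by
            by_contra hne
            exact (Set.disjoint_left.1 (hDdisj hne)) (hσmem z hzV) hzD
          exact ⟨z, ⟨hzV, by simpa using hfz⟩, hσz⟩
      have hSfin : S.Finite := hσim ▸ (hFfin w hw).image σ
      have hScard : S.ncard = m := by
        rw [← hσim, Set.ncard_image_of_injOn hσinj]
        exact hcount w hw
      calc ∑' k, (f '' D k).indicator g w = ∑' k, S.indicator (fun _ => g w) k := by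
            refine tsum_congr fun k => ?_
            by_cases hk : k ∈ S
            · rw [Set.indicator_of_mem hk, Set.indicator_of_mem (by exact hk)]
            · rw [Set.indicator_of_notMem hk, Set.indicator_of_notMem (by exact hk)]
        _ = ∑ k ∈ hSfin.toFinset, S.indicator (fun _ => g w) k := by
            refine tsum_eq_sum fun k hk => ?_
            exact Set.indicator_of_notMem (by simpa using hk) _
        _ = ∑ k ∈ hSfin.toFinset, g w := by
            refine Finset.sum_congr rfl fun k hk => ?_
            exact Set.indicator_of_mem (by simpa using hk) _
        _ = hSfin.toFinset.card • g w := Finset.sum_const _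
        _ = (m : ENNReal) * g w := by
            rw [← Set.ncard_eq_toFinset_card _ hSfin, hScard, nsmul_eq_mul]
    · rw [Set.indicator_of_notMem hw]
      refine ENNReal.tsum_eq_zero.2 fun k => Set.indicator_of_notMem ?_ _
      intro hwk
      apply hw
      have h1 : w ∈ f '' V := Set.image_mono ((hDsub k).trans (hUsubV k)) hwk
      rw [honto] at h1
      exact h1
  -- a.e. set identifications
  have hΩ₁V : Ω₁ =ᵐ[volume] V := by
    rw [MeasureTheory.ae_eq_set]
    constructor
    · refine measure_mono_null (fun z hz => ?_) hE0
      rcases Classical.em (z ∈ E) with h | h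
      · exact h
      · exact absurd ⟨hz.1, h⟩ hz.2
    · have h0 : V \ Ω₁ = ∅ := by
        apply Set.eq_empty_iff_forall_notMem.2
        rintro z ⟨⟨hz1, _⟩, hz2⟩
        exact hz2 hz1
      rw [h0]
      exact measure_empty
  have hΩ₂W : Ω₂ =ᵐ[volume] W := by
    rw [MeasureTheory.ae_eq_set]
    constructor
    · refine measure_mono_null (fun z hz => ?_) hfE0
      rcases Classical.em (z ∈ f '' E) with h | h
      · exact h
      · exact absurd ⟨hz.1, h⟩ hz.2
    · have h0 : W \ Ω₂ = ∅ := by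
        apply Set.eq_empty_iff_forall_notMem.2
        rintro z ⟨⟨hz1, _⟩, hz2⟩
        exact hz2 hz1
      rw [h0]
      exact measure_empty
  have hWnull : NullMeasurableSet W volume :=
    (hΩ₂o.measurableSet.nullMeasurableSet).diff (NullMeasurableSet.of_null hfE0)
  calc ∫⁻ z in Ω₁, (‖jacDet f z‖₊ : ENNReal) ^ 2 * g (f z)
      = ∫⁻ z in V, (‖jacDet f z‖₊ : ENNReal) ^ 2 * g (f z) := by
        rw [Measure.restrict_congr_set hΩ₁V]
    _ = ∑' k, ∫⁻ z in D k, (‖jacDet f z‖₊ : ENNReal) ^ 2 * g (f z) := by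
        rw [← hDV, lintegral_iUnion hDm hDdisj]
    _ = ∑' k, ∫⁻ w in f '' D k, g w := by
        refine tsum_congr fun k => ?_
        rw [lintegral_image_eq_lintegral_abs_det_fderiv_mul volume (hDm k) (hDf' k) (hDinj k) g]
        refine setLIntegral_congr_fun (hDm k) (fun x hx => ?_)
        have hd : (fderiv ℝ f x).det = ‖jacDet f x‖ ^ 2 := hjac x (hDΩ k hx)
        rw [hd, abs_of_nonneg (by positivity), ENNReal.ofReal_pow (norm_nonneg _),
          ofReal_norm, enorm_eq_nnnorm]
    _ = ∑' k, ∫⁻ w, (f '' D k).indicator g w := by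
        refine tsum_congr fun k => (lintegral_indicator (hfDm k) g).symm
    _ = ∫⁻ w, ∑' k, (f '' D k).indicator g w :=
        (lintegral_tsum fun k => (hg.indicator (hfDm k)).aemeasurable).symm
    _ = ∫⁻ w, W.indicator (fun w => (m : ENNReal) * g w) w := by
        exact lintegral_congr hsum
    _ = ∫⁻ w in W, (m : ENNReal) * g w := lintegral_indicator₀ hWnull _
    _ = (m : ENNReal) * ∫⁻ w in W, g w := lintegral_const_mul _ hg
    _ = (m : ENNReal) * ∫⁻ w in Ω₂, g w := by rw [Measure.restrict_congr_set hΩ₂W]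

/-- Change-of-variables isometry for a proper holomorphic map of degree `m`:
for measurable `ψ`, `u·(ψ∘f) ∈ L²(Ω₁)` iff `ψ ∈ L²(Ω₂)`, and then
`‖u·(ψ∘f)‖²_{L²(Ω₁)} = m·‖ψ‖²_{L²(Ω₂)}`. -/
theorem proper_map_L2_isometry
    {n m : ℕ} (Ω₁ Ω₂ : Set (Fin n → ℂ))
    (hΩ₁o : IsOpen Ω₁) (hΩ₁c : IsConnected Ω₁) (hΩ₁b : Bornology.IsBounded Ω₁)
    (hΩ₂o : IsOpen Ω₂) (hΩ₂c : IsConnected Ω₂) (hΩ₂b : Bornology.IsBounded Ω₂)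
    (f : (Fin n → ℂ) → (Fin n → ℂ))
    (hf : DifferentiableOn ℂ f Ω₁) (hmaps : Set.MapsTo f Ω₁ Ω₂)
    -- `f : Ω₁ → Ω₂` is proper
    (hproper : ∀ L : Set (Fin n → ℂ), L ⊆ Ω₂ → IsCompact L → IsCompact (Ω₁ ∩ f ⁻¹' L))
    -- the critical set `E = {u = 0}` and its image have measure zero
    (E : Set (Fin n → ℂ)) (hE : E = {z ∈ Ω₁ | jacDet f z = 0})
    (hE0 : volume E = 0) (hfE0 : volume (f '' E) = 0)
    -- `f` is an `m`-to-one covering of `Ω₁ \ E` onto `Ω₂ \ f(E)`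
    (hcount : ∀ w ∈ Ω₂ \ f '' E, ((Ω₁ \ E) ∩ f ⁻¹' {w}).ncard = m)
    (honto : f '' (Ω₁ \ E) = Ω₂ \ f '' E)
    -- the real Jacobian determinant of `f` equals `|u|²`
    (hjac : ∀ z ∈ Ω₁, LinearMap.det ((fderiv ℝ f z).toLinearMap) = ‖jacDet f z‖ ^ 2)
    (ψ : (Fin n → ℂ) → ℂ) (hψm : Measurable ψ) :
    (MemLp (fun z => jacDet f z * ψ (f z)) 2 (volume.restrict Ω₁)
        ↔ MemLp ψ 2 (volume.restrict Ω₂)) ∧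
      (MemLp ψ 2 (volume.restrict Ω₂) →
        ∫ z in Ω₁, ‖jacDet f z * ψ (f z)‖ ^ 2 = m * ∫ w in Ω₂, ‖ψ w‖ ^ 2) := by
  obtain ⟨hm1, hkey⟩ := aux_key Ω₁ Ω₂ hΩ₁o hΩ₂o hΩ₂c f hf hproper E hE hE0 hfE0 hcount honto hjac
  have hg : Measurable (fun w => (‖ψ w‖₊ : ENNReal) ^ 2) :=
    (hψm.nnnorm.coe_nnreal_ennreal).pow_const 2
  have hI := hkey _ hg
  set L₁ : ENNReal := ∫⁻ z in Ω₁, (‖jacDet f z * ψ (f z)‖₊ : ENNReal) ^ 2 with hL₁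
  set L₂ : ENNReal := ∫⁻ w in Ω₂, (‖ψ w‖₊ : ENNReal) ^ 2 with hL₂
  have hL : L₁ = (m : ENNReal) * L₂ := by
    rw [hL₁]
    rw [← hI]
    refine lintegral_congr fun z => ?_
    rw [nnnorm_mul]
    push_cast
    ring
  have haesm1 : AEStronglyMeasurable (fun z => jacDet f z * ψ (f z)) (volume.restrict Ω₁) := by
    have h1 : AEMeasurable (jacDet f) (volume.restrict Ω₁) :=
      (aux_jacDet_continuousOn hΩ₁o hf (aux_fderiv_continuousOn hΩ₁o hf)).aemeasurable
        hΩ₁o.measurableSet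
    have h2 : AEMeasurable f (volume.restrict Ω₁) :=
      hf.continuousOn.aemeasurable hΩ₁o.measurableSet
    exact (h1.mul (hψm.comp_aemeasurable h2)).aestronglyMeasurable
  have hchar : ∀ (h : (Fin n → ℂ) → ℂ) (μ : Measure (Fin n → ℂ)), AEStronglyMeasurable h μ →
      (MemLp h 2 μ ↔ ∫⁻ a, (‖h a‖₊ : ENNReal) ^ 2 ∂μ < ⊤) := by
    intro h μ hh
    constructor
    · intro hm
      have := (eLpNorm_lt_top_iff_lintegral_rpow_enorm_lt_top (μ := μ) (f := h)
        two_ne_zero ENNReal.ofNat_ne_top).1 hm.2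
      simpa [ENNReal.toReal_ofNat, ENNReal.rpow_two, enorm_eq_nnnorm] using this
    · intro hlt
      refine ⟨hh, (eLpNorm_lt_top_iff_lintegral_rpow_enorm_lt_top two_ne_zero
        ENNReal.ofNat_ne_top).2 ?_⟩
      simpa [ENNReal.toReal_ofNat, ENNReal.rpow_two, enorm_eq_nnnorm] using hlt
  have hchar1 := hchar _ _ haesm1
  have hchar2 := hchar ψ (volume.restrict Ω₂) hψm.aestronglyMeasurable
  have hiff : MemLp (fun z => jacDet f z * ψ (f z)) 2 (volume.restrict Ω₁)
      ↔ MemLp ψ 2 (volume.restrict Ω₂) := by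
    rw [hchar1, hchar2, ← hL₁, ← hL₂, hL]
    constructor
    · intro h1
      have hle : L₂ ≤ (m : ENNReal) * L₂ := by
        conv_lhs => rw [← one_mul L₂]
        exact mul_le_mul_left (by exact_mod_cast hm1) L₂
      exact lt_of_le_of_lt hle h1
    · intro h2
      exact ENNReal.mul_lt_top (ENNReal.natCast_lt_top m) h2
  refine ⟨hiff, fun hψ2 => ?_⟩
  have haesq1 : AEStronglyMeasurable (fun z => ‖jacDet f z * ψ (f z)‖ ^ 2)
      (volume.restrict Ω₁) :=
    ((haesm1.aemeasurable.norm).pow_const 2).aestronglyMeasurable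
  have haesq2 : AEStronglyMeasurable (fun w => ‖ψ w‖ ^ 2) (volume.restrict Ω₂) :=
    ((hψm.aemeasurable.norm).pow_const 2).aestronglyMeasurable
  have hreal1 : ∫ z in Ω₁, ‖jacDet f z * ψ (f z)‖ ^ 2 = L₁.toReal := by
    rw [integral_eq_lintegral_of_nonneg_ae (Filter.Eventually.of_forall fun z => by positivity)
      haesq1, hL₁]
    congr 1
    refine lintegral_congr fun z => ?_
    rw [ENNReal.ofReal_pow (norm_nonneg _), ofReal_norm, enorm_eq_nnnorm]
  have hreal2 : ∫ w in Ω₂, ‖ψ w‖ ^ 2 = L₂.toReal := by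
    rw [integral_eq_lintegral_of_nonneg_ae (Filter.Eventually.of_forall fun w => by positivity)
      haesq2, hL₂]
    congr 1
    refine lintegral_congr fun w => ?_
    rw [ENNReal.ofReal_pow (norm_nonneg _), ofReal_norm, enorm_eq_nnnorm]
  rw [hreal1, hreal2, hL, ENNReal.toReal_mul, ENNReal.toReal_natCast]
end

section
/- Let Ω ⊂ ℂ be a bounded smoothly bounded domain whose boundary has inner components γ₁,…,γ_{m−1}, and suppose ζ₁,…,ζ_{m−1} ∈ Ω are such that the (m−1)×(m−1) period matrix M with entries M_{ij} = ∮_{γ_i} K_Ω(z, ζ_j) dz is invertible. Then for every holomorphic u(z', z_n) on D × Ω with D ⊂ ℂ^{n−1} a domain, there exist unique holomorphic functions a₁(z'),…,a_{m−1}(z') on D such that v(z', z_n) = u(z', z_n) − Σ_j a_j(z')K_Ω(z_n, ζ_j) has vanishing periods: ∮_{γ_i} v(z', z_n) dz_n = 0 for all i and all z' ∈ D. Consequently ∂g/∂z_n = v admits a single-valued holomorphic solution g on D × Ω. -/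
set_option maxHeartbeats 1000000

open MeasureTheory intervalIntegral

open Metric Topology

lemma aux_fderiv_bound {E : Type*} [NormedAddCommGroup E] [NormedSpace ℂ E]
    {f : E → ℂ} {x : E} {r C : ℝ} (hr : 0 < r)
    (hd : ∀ y ∈ ball x r, DifferentiableAt ℂ f y)
    (hC : ∀ y ∈ ball x r, ‖f y‖ ≤ C) :
    ‖fderiv ℂ f x‖ ≤ C / (r / 2) := by
  have hC0 : 0 ≤ C := le_trans (norm_nonneg _) (hC x (mem_ball_self hr))
  refine ContinuousLinearMap.opNorm_le_bound _ (by positivity) fun d => ?_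
  rcases eq_or_ne d 0 with rfl | hd0
  · simp
  have hdpos : 0 < ‖d‖ := norm_pos_iff.2 hd0
  set R : ℝ := (r / 2) / ‖d‖ with hR
  have hRpos : 0 < R := by positivity
  set g : ℂ → ℂ := fun z => f (x + z • d) with hg
  have hmem : ∀ z : ℂ, z ∈ closedBall (0 : ℂ) R → x + z • d ∈ ball x r := by
    intro z hz
    simp only [mem_closedBall, dist_zero_right] at hz
    have h1 : dist (x + z • d) x = ‖z‖ * ‖d‖ := by
      simp [dist_eq_norm, norm_smul]
    rw [mem_ball, h1]
    calc ‖z‖ * ‖d‖ ≤ R * ‖d‖ := by gcongr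
      _ = r / 2 := by rw [hR]; field_simp
      _ < r := by linarith
  have hgd : DifferentiableOn ℂ g (closedBall (0 : ℂ) R) := by
    intro z hz
    have h1 : DifferentiableAt ℂ (fun z : ℂ => x + z • d) z :=
      (differentiable_id.smul_const d).differentiableAt.const_add x
    exact ((hd _ (hmem z hz)).comp z h1).differentiableWithinAt
  have hgder : HasDerivAt g (fderiv ℂ f x d) 0 := by
    have h1 : HasDerivAt (fun z : ℂ => x + z • d) d 0 := by
      simpa using ((hasDerivAt_id (0 : ℂ)).smul_const d).const_add x
    have h2 : HasFDerivAt f (fderiv ℂ f x) (x + (0 : ℂ) • d) := by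
      simpa using (hd x (mem_ball_self hr)).hasFDerivAt
    exact h2.comp_hasDerivAt 0 h1
  have hkey : ‖deriv g 0‖ ≤ C / R := by
    refine Complex.norm_deriv_le_of_forall_mem_sphere_norm_le hRpos ?_ ?_
    · exact (hgd.mono closure_ball_subset_closedBall).diffContOnCl
    · intro z hz
      exact hC _ (hmem z (sphere_subset_closedBall hz))
  rw [hgder.deriv] at hkey
  calc ‖fderiv ℂ f x d‖ ≤ C / R := hkey
    _ = C / (r / 2) * ‖d‖ := by rw [hR]; field_simp

lemma aux_bound_on_compact {E : Type*} [NormedAddCommGroup E] [NormedSpace ℂ E] [ProperSpace E]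
    {U : Set E} (hU : IsOpen U) {f : E → ℂ} (hf : DifferentiableOn ℂ f U)
    {K : Set E} (hK : IsCompact K) (hKU : K ⊆ U) :
    ∃ C : ℝ, 0 ≤ C ∧ ∀ x ∈ K, ‖fderiv ℂ f x‖ ≤ C := by
  obtain ⟨δ, hδ, hsub⟩ := hK.exists_cthickening_subset_open hU hKU
  have hcomp : IsCompact (cthickening δ K) := hK.cthickening
  obtain ⟨C, hCb⟩ := hcomp.exists_bound_of_continuousOn (hf.continuousOn.mono hsub)
  refine ⟨max 0 (C / (δ / 2)), le_max_left _ _, fun x hx => ?_⟩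
  refine le_trans (aux_fderiv_bound hδ ?_ ?_) (le_max_right _ _)
  · intro y hy
    refine hf.differentiableAt (hU.mem_nhds (hsub ?_))
    exact (ball_subset_thickening hx δ).trans (thickening_subset_cthickening δ K) hy
  · intro y hy
    exact hCb y ((ball_subset_thickening hx δ).trans (thickening_subset_cthickening δ K) hy)

lemma paramDiff {H E : Type*} [NormedAddCommGroup H] [NormedSpace ℂ H] [FiniteDimensional ℂ H]
    [NormedAddCommGroup E] [NormedSpace ℂ E] [FiniteDimensional ℂ E]
    {U : Set E} (hU : IsOpen U) {f : E → ℂ} (hf : DifferentiableOn ℂ f U)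
    {A : ℝ → H →L[ℂ] E} {c : ℝ → E} {ψ : ℝ → ℂ}
    (hc : ContinuousOn c (Set.Icc 0 1)) (hA : ContinuousOn A (Set.Icc 0 1))
    (hψ : ContinuousOn ψ (Set.Icc 0 1))
    (x₀ : H) (hmem : ∀ t ∈ Set.Icc (0 : ℝ) 1, c t + A t x₀ ∈ U) :
    DifferentiableAt ℂ (fun x => ∫ t in (0 : ℝ)..1, f (c t + A t x) * ψ t) x₀ := by
  borelize E
  have hIsub : Set.uIoc (0 : ℝ) 1 ⊆ Set.Icc (0 : ℝ) 1 := by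
    rw [Set.uIoc_of_le zero_le_one]; exact Set.Ioc_subset_Icc_self
  have hIcc2 : Set.uIcc (0 : ℝ) 1 = Set.Icc (0 : ℝ) 1 := Set.uIcc_of_le zero_le_one
  -- continuity of t ↦ A t x for fixed x
  have hAx : ∀ x : H, ContinuousOn (fun t => c t + A t x) (Set.Icc 0 1) := fun x =>
    hc.add (((ContinuousLinearMap.apply ℂ E x).continuous).comp_continuousOn hA)
  -- compact image and thickening
  obtain ⟨δ, hδ, hsub⟩ := ((isCompact_Icc.image_of_continuousOn (hAx x₀)).exists_cthickening_subset_open hU)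
    (Set.image_subset_iff.2 hmem)
  set K' : Set E := cthickening δ ((fun t => c t + A t x₀) '' Set.Icc 0 1) with hK'
  have hK'c : IsCompact K' := (isCompact_Icc.image_of_continuousOn (hAx x₀)).cthickening
  obtain ⟨Cf, hCf0, hCf⟩ := aux_bound_on_compact hU hf hK'c hsub
  obtain ⟨CA, hCA⟩ := isCompact_Icc.exists_bound_of_continuousOn hA
  obtain ⟨Cψ, hCψ⟩ := isCompact_Icc.exists_bound_of_continuousOn hψ
  have hCA0 : 0 ≤ CA := le_trans (norm_nonneg _) (hCA 0 (by norm_num))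
  have hCψ0 : 0 ≤ Cψ := le_trans (norm_nonneg _) (hCψ 0 (by norm_num))
  set ε : ℝ := δ / (CA + 1) with hε
  have hεpos : 0 < ε := by positivity
  -- membership of perturbed points
  have hxmem : ∀ x ∈ ball x₀ ε, ∀ t ∈ Set.Icc (0 : ℝ) 1, c t + A t x ∈ K' := by
    intro x hx t ht
    refine thickening_subset_cthickening δ _ ?_
    rw [mem_thickening_iff]
    refine ⟨c t + A t x₀, Set.mem_image_of_mem _ ht, ?_⟩
    have h1 : dist (c t + A t x) (c t + A t x₀) = ‖A t (x - x₀)‖ := by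
      rw [dist_eq_norm]; congr 1
      simp [map_sub]
    rw [h1]
    calc ‖A t (x - x₀)‖ ≤ ‖A t‖ * ‖x - x₀‖ := (A t).le_opNorm _
      _ ≤ CA * ‖x - x₀‖ := by gcongr; exact hCA t ht
      _ < (CA + 1) * ε := by
          have hxd : ‖x - x₀‖ < ε := by rwa [← dist_eq_norm, ← mem_ball]
          nlinarith [mul_le_mul_of_nonneg_left hxd.le hCA0]
      _ = δ * ((CA + 1) / (CA + 1)) := by rw [hε]; ring
      _ ≤ δ := by rw [div_self (by positivity)]; simp
  have hK'U : ∀ x ∈ ball x₀ ε, ∀ t ∈ Set.Icc (0 : ℝ) 1, c t + A t x ∈ U :=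
    fun x hx t ht => hsub (hxmem x hx t ht)
  -- the derivative candidate
  set F' : H → ℝ → H →L[ℂ] ℂ := fun x t => ψ t • ((fderiv ℂ f (c t + A t x)).comp (A t)) with hF'
  have key := intervalIntegral.hasFDerivAt_integral_of_dominated_of_fderiv_le
    (𝕜 := ℂ) (μ := volume) (F := fun x t => f (c t + A t x) * ψ t) (F' := F') (x₀ := x₀)
    (a := 0) (b := 1) (bound := fun _ => Cψ * (Cf * CA)) (ball_mem_nhds x₀ hεpos) ?_ ?_ ?_ ?_ ?_ ?_
  · exact key.differentiableAt
  · -- hF_meas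
    filter_upwards [ball_mem_nhds x₀ hεpos] with x hx
    refine ((((hf.continuousOn.comp (hAx x) (fun t ht => hK'U x hx t ht)).mul hψ).mono hIsub).aestronglyMeasurable measurableSet_uIoc)
  · -- hF_int
    refine ContinuousOn.intervalIntegrable ?_
    rw [hIcc2]
    exact (hf.continuousOn.comp (hAx x₀) (fun t ht => hK'U x₀ (mem_ball_self hεpos) t ht)).mul hψ
  · -- hF'_meas
    borelize (E →L[ℂ] ℂ) (H →L[ℂ] E) (H →L[ℂ] ℂ)
    have h1 : AEMeasurable (fun t => c t + A t x₀) (volume.restrict (Set.uIoc (0 : ℝ) 1)) :=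
      ((hAx x₀).mono hIsub).aemeasurable measurableSet_uIoc
    have h2 : AEMeasurable (fun t => fderiv ℂ f (c t + A t x₀)) (volume.restrict (Set.uIoc (0 : ℝ) 1)) :=
      (measurable_fderiv ℂ f).comp_aemeasurable h1
    have hAm : AEMeasurable A (volume.restrict (Set.uIoc (0 : ℝ) 1)) :=
      (hA.mono hIsub).aemeasurable measurableSet_uIoc
    have hψm : AEMeasurable ψ (volume.restrict (Set.uIoc (0 : ℝ) 1)) :=
      (hψ.mono hIsub).aemeasurable measurableSet_uIoc
    have h3 : AEMeasurable (fun t => (fderiv ℂ f (c t + A t x₀)).comp (A t))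
        (volume.restrict (Set.uIoc (0 : ℝ) 1)) := by
      have hcont : Continuous (fun q : (E →L[ℂ] ℂ) × (H →L[ℂ] E) => q.1.comp q.2) :=
        (ContinuousLinearMap.compL ℂ H E ℂ).continuous₂
      exact hcont.measurable.comp_aemeasurable (h2.prodMk hAm)
    exact ((continuous_smul.measurable.comp_aemeasurable (hψm.prodMk h3))).aestronglyMeasurable
  · -- h_bound
    refine Filter.Eventually.of_forall fun t => fun ht x hx => ?_
    have ht' : t ∈ Set.Icc (0 : ℝ) 1 := hIsub ht
    rw [hF']
    calc ‖ψ t • ((fderiv ℂ f (c t + A t x)).comp (A t))‖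
        = ‖ψ t‖ * ‖(fderiv ℂ f (c t + A t x)).comp (A t)‖ := norm_smul _ _
      _ ≤ ‖ψ t‖ * (‖fderiv ℂ f (c t + A t x)‖ * ‖A t‖) := by
          gcongr; exact ContinuousLinearMap.opNorm_comp_le _ _
      _ ≤ Cψ * (Cf * CA) := by
          have h1 : ‖fderiv ℂ f (c t + A t x)‖ ≤ Cf := hCf _ (hxmem x hx t ht')
          have h2 : ‖A t‖ ≤ CA := hCA t ht'
          have h3 : ‖ψ t‖ ≤ Cψ := hCψ t ht'
          have h4 := mul_le_mul h1 h2 (norm_nonneg _) hCf0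
          exact mul_le_mul h3 h4 (by positivity) hCψ0
  · exact intervalIntegrable_const
  · -- h_diff
    refine Filter.Eventually.of_forall fun t => fun ht x hx => ?_
    have ht' : t ∈ Set.Icc (0 : ℝ) 1 := hIsub ht
    have hin : HasFDerivAt (fun x : H => c t + A t x) (A t) x := (A t).hasFDerivAt.const_add (c t)
    have hout : HasFDerivAt f (fderiv ℂ f (c t + A t x)) (c t + A t x) :=
      (hf.differentiableAt (hU.mem_nhds (hK'U x hx t ht'))).hasFDerivAt
    exact (hout.comp x hin).mul_const (ψ t)

/-- Killing the periods of `u` around the inner boundary components of `Ω` by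
subtracting `Σ_j a_j(z') K_Ω(z_n, ζ_j)`: if the period matrix
`M_{ij} = ∮_{γ_i} K_Ω(z, ζ_j) dz` is invertible, there are unique holomorphic
functions `a_j` on `D` so that the modified function `v` has vanishing periods, and
then `∂g/∂z_n = v` admits a single-valued holomorphic solution `g` on `D × Ω`. -/
theorem periods_killed_and_primitive_exists
    (p N : ℕ) (D : Set (Fin p → ℂ)) (hDo : IsOpen D) (hDc : IsConnected D)
    (Ω : Set ℂ) (hΩo : IsOpen Ω) (hΩc : IsConnected Ω) (hΩb : Bornology.IsBounded Ω)
    -- the inner boundary components, represented by closed `C¹` cycles in `Ω`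
    (γ γ' : Fin N → ℝ → ℂ)
    (hγΩ : ∀ i, ∀ t ∈ Set.Icc (0 : ℝ) 1, γ i t ∈ Ω)
    (hγcl : ∀ i, γ i 1 = γ i 0)
    (hγd : ∀ i, ∀ t ∈ Set.Icc (0 : ℝ) 1, HasDerivAt (γ i) (γ' i t) t)
    (hγ'c : ∀ i, ContinuousOn (γ' i) (Set.Icc (0 : ℝ) 1))
    -- these cycles detect exactness: a holomorphic function on `Ω` with vanishing
    -- periods around all of them has a primitive on `Ω`
    (hgen : ∀ h : ℂ → ℂ, DifferentiableOn ℂ h Ω →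
      (∀ i, (∫ t in (0 : ℝ)..1, h (γ i t) * γ' i t) = 0) →
      ∃ H : ℂ → ℂ, DifferentiableOn ℂ H Ω ∧ ∀ w ∈ Ω, HasDerivAt H (h w) w)
    -- the Bergman kernel of `Ω`, holomorphic in its first variable
    (K : ℂ → ℂ → ℂ) (hK : ∀ ζ ∈ Ω, DifferentiableOn ℂ (fun z => K z ζ) Ω)
    (ζ : Fin N → ℂ) (hζ : ∀ j, ζ j ∈ Ω)
    -- the period matrix `M_{ij} = ∮_{γ_i} K_Ω(z, ζ_j) dz` is invertible
    (M : Matrix (Fin N) (Fin N) ℂ)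
    (hM : M = Matrix.of fun i j => ∫ t in (0 : ℝ)..1, K (γ i t) (ζ j) * γ' i t)
    (hMinv : IsUnit M.det)
    (u : (Fin p → ℂ) × ℂ → ℂ) (hu : DifferentiableOn ℂ u (D ×ˢ Ω)) :
    ∃ A : Fin N → (Fin p → ℂ) → ℂ,
      (∀ j, DifferentiableOn ℂ (A j) D) ∧
      -- the modified function `v(z', z_n) = u(z', z_n) − Σ_j a_j(z') K_Ω(z_n, ζ_j)`
      -- has vanishing periods around every `γ_i`
      (∀ z' ∈ D, ∀ i,
        (∫ t in (0 : ℝ)..1,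
          (u (z', γ i t) - ∑ j, A j z' * K (γ i t) (ζ j)) * γ' i t) = 0) ∧
      -- uniqueness of the functions `a_j` on `D`
      (∀ B : Fin N → (Fin p → ℂ) → ℂ, (∀ j, DifferentiableOn ℂ (B j) D) →
        (∀ z' ∈ D, ∀ i,
          (∫ t in (0 : ℝ)..1,
            (u (z', γ i t) - ∑ j, B j z' * K (γ i t) (ζ j)) * γ' i t) = 0) →
        ∀ j, ∀ z' ∈ D, B j z' = A j z') ∧
      -- consequently `∂g/∂z_n = v` has a single-valued holomorphic solution on `D × Ω`
      (∃ g : (Fin p → ℂ) × ℂ → ℂ, DifferentiableOn ℂ g (D ×ˢ Ω) ∧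
        ∀ z' ∈ D, ∀ w ∈ Ω,
          HasDerivAt (fun ζ' => g (z', ζ'))
            (u (z', w) - ∑ j, A j z' * K w (ζ j)) w) := by
  classical
  have h01 : Set.uIcc (0 : ℝ) 1 = Set.Icc (0 : ℝ) 1 := Set.uIcc_of_le zero_le_one
  have hγc : ∀ i, ContinuousOn (γ i) (Set.Icc 0 1) :=
    fun i t ht => ((hγd i t ht).continuousAt).continuousWithinAt
  have huc := hu.continuousOn
  have hKc : ∀ j, ContinuousOn (fun z => K z (ζ j)) Ω := fun j => (hK (ζ j) (hζ j)).continuousOn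
  -- basic integrability
  have hIu : ∀ z' ∈ D, ∀ i, IntervalIntegrable (fun t => u (z', γ i t) * γ' i t) volume 0 1 := by
    intro z' hz' i
    apply ContinuousOn.intervalIntegrable
    rw [h01]
    exact (huc.comp (continuousOn_const.prodMk (hγc i))
      (fun t ht => Set.mk_mem_prod hz' (hγΩ i t ht))).mul (hγ'c i)
  have hIK : ∀ i j, IntervalIntegrable (fun t => K (γ i t) (ζ j) * γ' i t) volume 0 1 := by
    intro i j
    apply ContinuousOn.intervalIntegrable
    rw [h01]
    exact ((hKc j).comp (hγc i) (fun t ht => hγΩ i t ht)).mul (hγ'c i)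
  -- the period functions
  set per : Fin N → (Fin p → ℂ) → ℂ :=
    fun i z' => ∫ t in (0 : ℝ)..1, u (z', γ i t) * γ' i t with hper
  have hperd : ∀ i, DifferentiableOn ℂ (per i) D := by
    intro i z' hz'
    refine DifferentiableAt.differentiableWithinAt ?_
    have hd := paramDiff (H := Fin p → ℂ) (E := (Fin p → ℂ) × ℂ) (hDo.prod hΩo) hu
      (A := fun _ => ContinuousLinearMap.inl ℂ (Fin p → ℂ) ℂ)
      (c := fun t => ((0 : Fin p → ℂ), γ i t)) (ψ := γ' i)
      (continuousOn_const.prodMk (hγc i)) continuousOn_const (hγ'c i) z'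
      (fun t ht => by
        simpa using Set.mk_mem_prod hz' (hγΩ i t ht))
    have heq : (fun x : Fin p → ℂ => ∫ t in (0 : ℝ)..1,
        u (((0 : Fin p → ℂ), γ i t) + (ContinuousLinearMap.inl ℂ (Fin p → ℂ) ℂ) x) * γ' i t)
        = per i := by
      funext x
      refine intervalIntegral.integral_congr fun t ht => ?_
      simp
    rwa [heq] at hd
  -- the coefficients
  set Acoef : Fin N → (Fin p → ℂ) → ℂ := fun j z' => ∑ k, M⁻¹ j k * per k z' with hAcoef
  have hAd : ∀ j, DifferentiableOn ℂ (Acoef j) D := by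
    intro j
    apply DifferentiableOn.fun_sum
    intro k _
    exact (hperd k).const_mul _
  -- key computation of the periods of the modified function
  have hcomp : ∀ z' ∈ D, ∀ i, ∀ E : Fin N → ℂ,
      (∫ t in (0 : ℝ)..1, (u (z', γ i t) - ∑ j, E j * K (γ i t) (ζ j)) * γ' i t)
        = per i z' - ∑ j, E j * M i j := by
    intro z' hz' i E
    have h1 : ∀ t : ℝ, (u (z', γ i t) - ∑ j, E j * K (γ i t) (ζ j)) * γ' i t
        = u (z', γ i t) * γ' i t - ∑ j, E j * (K (γ i t) (ζ j) * γ' i t) := by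
      intro t
      rw [sub_mul, Finset.sum_mul]
      congr 1
      exact Finset.sum_congr rfl fun j _ => mul_assoc _ _ _
    have hieq : (∫ t in (0 : ℝ)..1, (u (z', γ i t) - ∑ j, E j * K (γ i t) (ζ j)) * γ' i t)
        = ∫ t in (0 : ℝ)..1,
          (u (z', γ i t) * γ' i t - ∑ j, E j * (K (γ i t) (ζ j) * γ' i t)) :=
      intervalIntegral.integral_congr fun t _ => h1 t
    rw [hieq]
    have hterm : ∀ j, IntervalIntegrable (fun t => E j * (K (γ i t) (ζ j) * γ' i t)) volume 0 1 :=
      fun j => (hIK i j).const_mul (E j)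
    have hsum : IntervalIntegrable
        (fun t => ∑ j, E j * (K (γ i t) (ζ j) * γ' i t)) volume 0 1 := by
      have h := IntervalIntegrable.sum
        (f := fun j t => E j * (K (γ i t) (ζ j) * γ' i t)) Finset.univ (fun j _ => hterm j)
      simpa [← Finset.sum_fn] using h
    rw [intervalIntegral.integral_sub (hIu z' hz' i) hsum,
      intervalIntegral.integral_finset_sum (fun j _ => hterm j)]
    congr 1
    refine Finset.sum_congr rfl fun j _ => ?_
    rw [intervalIntegral.integral_const_mul]
    congr 1
    rw [hM]
    rfl
  -- vanishing of periods for `Acoef`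
  have hvan : ∀ z' ∈ D, ∀ i,
      (∫ t in (0 : ℝ)..1,
        (u (z', γ i t) - ∑ j, Acoef j z' * K (γ i t) (ζ j)) * γ' i t) = 0 := by
    intro z' hz' i
    rw [hcomp z' hz' i (fun j => Acoef j z')]
    have hA' : (fun j => Acoef j z') = M⁻¹.mulVec (fun k => per k z') := by
      funext j
      simp [hAcoef, Matrix.mulVec, dotProduct]
    have h2 : ∑ j, Acoef j z' * M i j = M.mulVec (fun j => Acoef j z') i := by
      simp [Matrix.mulVec, dotProduct, mul_comm]
    rw [h2, hA', Matrix.mulVec_mulVec, Matrix.mul_nonsing_inv M hMinv, Matrix.one_mulVec]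
    exact sub_self _
  refine ⟨Acoef, hAd, hvan, ?_, ?_⟩
  · -- uniqueness
    intro B hBd hBvan j z' hz'
    have h1 : ∀ i, ∑ k, B k z' * M i k = per i z' := by
      intro i
      have hb := hBvan z' hz' i
      rw [hcomp z' hz' i (fun k => B k z')] at hb
      exact (sub_eq_zero.mp hb).symm
    have h2 : ∀ i, ∑ k, Acoef k z' * M i k = per i z' := by
      intro i
      have ha := hvan z' hz' i
      rw [hcomp z' hz' i (fun k => Acoef k z')] at ha
      exact (sub_eq_zero.mp ha).symm
    have hMv : M.mulVec (fun k => B k z') = M.mulVec (fun k => Acoef k z') := by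
      funext i
      have e1 : M.mulVec (fun k => B k z') i = ∑ k, B k z' * M i k := by
        simp [Matrix.mulVec, dotProduct, mul_comm]
      have e2 : M.mulVec (fun k => Acoef k z') i = ∑ k, Acoef k z' * M i k := by
        simp [Matrix.mulVec, dotProduct, mul_comm]
      rw [e1, e2, h1, h2]
    have := congrArg (fun v => M⁻¹.mulVec v) hMv
    simp only [Matrix.mulVec_mulVec, Matrix.nonsing_inv_mul M hMinv, Matrix.one_mulVec] at this
    exact congrFun this j
  · -- existence of the primitive
    set v : (Fin p → ℂ) × ℂ → ℂ :=
      fun q => u q - ∑ j, Acoef j q.1 * K q.2 (ζ j) with hvdef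
    have hvd : DifferentiableOn ℂ v (D ×ˢ Ω) := by
      refine hu.sub ?_
      refine DifferentiableOn.fun_sum fun j _ => ?_
      have h1 : DifferentiableOn ℂ (fun q : (Fin p → ℂ) × ℂ => Acoef j q.1) (D ×ˢ Ω) :=
        (hAd j).comp differentiable_fst.differentiableOn (fun q hq => hq.1)
      have h2 : DifferentiableOn ℂ (fun q : (Fin p → ℂ) × ℂ => K q.2 (ζ j)) (D ×ˢ Ω) :=
        (hK (ζ j) (hζ j)).comp differentiable_snd.differentiableOn (fun q hq => hq.2)
      exact h1.mul h2
    have hvc : ContinuousOn v (D ×ˢ Ω) := hvd.continuousOn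
    -- choose primitives in the second variable
    have hex : ∀ z' : Fin p → ℂ, ∃ Hc : ℂ → ℂ, z' ∈ D →
        (DifferentiableOn ℂ Hc Ω ∧ ∀ w ∈ Ω, HasDerivAt Hc (v (z', w)) w) := by
      intro z'
      by_cases hz : z' ∈ D
      · have hdiff : DifferentiableOn ℂ (fun w => v (z', w)) Ω := by
          refine hvd.comp ?_ ?_
          · exact ((differentiable_const z').prodMk differentiable_id).differentiableOn
          · exact fun w hw => Set.mk_mem_prod hz hw
        obtain ⟨Hc, hH1, hH2⟩ := hgen (fun w => v (z', w)) hdiff (fun i => hvan z' hz i)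
        exact ⟨Hc, fun _ => ⟨hH1, hH2⟩⟩
      · exact ⟨fun _ => 0, fun h => absurd h hz⟩
    choose Hf hHf using hex
    obtain ⟨z₀, hz₀⟩ := hΩc.nonempty
    -- segments inside balls
    have hseg : ∀ (a w1 : ℂ) (r : ℝ), w1 ∈ ball a r → ∀ t ∈ Set.Icc (0 : ℝ) 1,
        a + (t : ℂ) * (w1 - a) ∈ ball a r := by
      intro a w1 r hw t ht
      rw [mem_ball] at hw ⊢
      have hd : dist (a + (t : ℂ) * (w1 - a)) a = |t| * dist w1 a := by
        rw [dist_eq_norm, dist_eq_norm]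
        have : a + (t : ℂ) * (w1 - a) - a = (t : ℂ) * (w1 - a) := by ring
        rw [this, norm_mul, Complex.norm_real, Real.norm_eq_abs]
      rw [hd]
      calc |t| * dist w1 a ≤ 1 * dist w1 a := by
            gcongr
            rw [abs_le]
            exact ⟨by linarith [ht.1], ht.2⟩
        _ = dist w1 a := one_mul _
        _ < r := hw
    -- fundamental theorem of calculus along segments
    have hFTC : ∀ z' ∈ D, ∀ a w1 : ℂ,
        (∀ t ∈ Set.Icc (0 : ℝ) 1, a + (t : ℂ) * (w1 - a) ∈ Ω) →
        Hf z' w1 - Hf z' a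
          = (w1 - a) * ∫ t in (0 : ℝ)..1, v (z', a + (t : ℂ) * (w1 - a)) := by
      intro z' hz' a w1 hsegΩ
      have hσd : ∀ t : ℝ, HasDerivAt (fun s : ℝ => a + (s : ℂ) * (w1 - a)) (w1 - a) t := by
        intro t
        have h1 : HasDerivAt (fun s : ℝ => (s : ℂ)) 1 t := by
          simpa using (hasDerivAt_id t).ofReal_comp
        simpa using (h1.mul_const (w1 - a)).const_add a
      have hσc : Continuous (fun t : ℝ => a + (t : ℂ) * (w1 - a)) :=
        continuous_const.add (Complex.continuous_ofReal.mul continuous_const)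
      have hcont : ContinuousOn (fun t : ℝ => v (z', a + (t : ℂ) * (w1 - a))) (Set.Icc 0 1) :=
        hvc.comp (continuousOn_const.prodMk hσc.continuousOn)
          (fun t ht => Set.mk_mem_prod hz' (hsegΩ t ht))
      have hint : IntervalIntegrable
          (fun t : ℝ => (w1 - a) * v (z', a + (t : ℂ) * (w1 - a))) volume 0 1 := by
        apply ContinuousOn.intervalIntegrable
        rw [h01]
        exact continuousOn_const.mul hcont
      have hder : ∀ t ∈ Set.uIcc (0 : ℝ) 1,
          HasDerivAt (fun s : ℝ => Hf z' (a + (s : ℂ) * (w1 - a)))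
            ((w1 - a) * v (z', a + (t : ℂ) * (w1 - a))) t := by
        intro t ht
        rw [h01] at ht
        have hout : HasDerivAt (Hf z') (v (z', a + (t : ℂ) * (w1 - a)))
            (a + (t : ℂ) * (w1 - a)) := (hHf z' hz').2 _ (hsegΩ t ht)
        have := hout.scomp t (hσd t)
        simpa [Function.comp_def, smul_eq_mul, mul_comm] using this
      have hkey := intervalIntegral.integral_eq_sub_of_hasDerivAt hder hint
      rw [intervalIntegral.integral_const_mul] at hkey
      have h1 : a + ((1 : ℝ) : ℂ) * (w1 - a) = w1 := by push_cast; ring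
      have h0 : a + ((0 : ℝ) : ℂ) * (w1 - a) = a := by push_cast; ring
      rw [h1, h0] at hkey
      exact hkey.symm
    -- joint differentiability of the segment integrals
    have hV2 : ∀ (a : ℂ) (r : ℝ), ball a r ⊆ Ω → ∀ z'₀ ∈ D, ∀ w₀ ∈ ball a r,
        DifferentiableAt ℂ
          (fun q : (Fin p → ℂ) × ℂ => ∫ t in (0 : ℝ)..1, v (q.1, a + (t : ℂ) * (q.2 - a)))
          (z'₀, w₀) := by
      intro a r hball z'₀ hz'₀ w₀ hw₀
      set AA : ℝ → ((Fin p → ℂ) × ℂ) →L[ℂ] ((Fin p → ℂ) × ℂ) := fun t =>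
        (ContinuousLinearMap.inl ℂ (Fin p → ℂ) ℂ).comp
            (ContinuousLinearMap.fst ℂ (Fin p → ℂ) ℂ)
          + (t : ℂ) • ((ContinuousLinearMap.inr ℂ (Fin p → ℂ) ℂ).comp
            (ContinuousLinearMap.snd ℂ (Fin p → ℂ) ℂ)) with hAA
      have hkey : ∀ (t : ℝ) (q : (Fin p → ℂ) × ℂ),
          ((0 : Fin p → ℂ), a - (t : ℂ) * a) + AA t q = (q.1, a + (t : ℂ) * (q.2 - a)) := by
        intro t q
        rw [hAA]
        simp only [ContinuousLinearMap.add_apply, ContinuousLinearMap.coe_comp',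
          Function.comp_apply, ContinuousLinearMap.smul_apply,
          ContinuousLinearMap.inl_apply, ContinuousLinearMap.inr_apply,
          ContinuousLinearMap.coe_fst', ContinuousLinearMap.coe_snd',
          Prod.smul_mk, Prod.mk_add_mk, smul_eq_mul, smul_zero, mul_zero,
          zero_add, add_zero, Prod.mk.injEq]
        constructor
        · simp
        · ring
      have hd := paramDiff (H := (Fin p → ℂ) × ℂ) (E := (Fin p → ℂ) × ℂ) (hDo.prod hΩo) hvd
        (A := AA) (c := fun t => ((0 : Fin p → ℂ), a - (t : ℂ) * a)) (ψ := fun _ => 1)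
        (continuousOn_const.prodMk
          ((continuous_const.sub (Complex.continuous_ofReal.mul continuous_const)).continuousOn))
        (continuousOn_const.add
          ((Complex.continuous_ofReal.smul continuous_const).continuousOn))
        continuousOn_const (z'₀, w₀)
        (fun t ht => by
          rw [hkey t (z'₀, w₀)]
          exact Set.mk_mem_prod hz'₀ (hball (hseg a w₀ r hw₀ t ht)))
      have heq : (fun q : (Fin p → ℂ) × ℂ =>
          ∫ t in (0 : ℝ)..1, v (((0 : Fin p → ℂ), a - (t : ℂ) * a) + AA t q) * 1)
          = (fun q : (Fin p → ℂ) × ℂ =>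
          ∫ t in (0 : ℝ)..1, v (q.1, a + (t : ℂ) * (q.2 - a))) := by
        funext q
        refine intervalIntegral.integral_congr fun t ht => ?_
        rw [hkey t q, mul_one]
      rwa [heq] at hd
    -- variant in the first variable only
    have hV1 : ∀ (a : ℂ) (r : ℝ), ball a r ⊆ Ω → ∀ w1 ∈ ball a r, ∀ z'₀ ∈ D,
        DifferentiableAt ℂ
          (fun z' => (w1 - a) * ∫ t in (0 : ℝ)..1, v (z', a + (t : ℂ) * (w1 - a))) z'₀ := by
      intro a r hball w1 hw1 z'₀ hz'₀
      have h1 := (hV2 a r hball z'₀ hz'₀ w1 hw1).comp z'₀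
        ((differentiableAt_id.prodMk (differentiableAt_const w1) :
          DifferentiableAt ℂ (fun z' : Fin p → ℂ => (z', w1)) z'₀))
      exact DifferentiableAt.const_mul (by simpa [Function.comp_def] using h1) (w1 - a)
    -- the set where the normalized primitive is holomorphic in z'
    set S : Set ℂ := {w | w ∈ Ω ∧ ∀ z'₀ ∈ D,
        DifferentiableAt ℂ (fun z' => Hf z' w - Hf z' z₀) z'₀} with hSdef
    have hstep : ∀ a ∈ S, ∀ r : ℝ, ball a r ⊆ Ω → ball a r ⊆ S := by
      intro a haS r hball w hw
      refine ⟨hball hw, fun z'₀ hz'₀ => ?_⟩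
      have hdiff : DifferentiableAt ℂ (fun z' =>
          (Hf z' a - Hf z' z₀)
            + (w - a) * ∫ t in (0 : ℝ)..1, v (z', a + (t : ℂ) * (w - a))) z'₀ :=
        (haS.2 z'₀ hz'₀).add (hV1 a r hball w hw z'₀ hz'₀)
      refine hdiff.congr_of_eventuallyEq ?_
      filter_upwards [hDo.mem_nhds hz'₀] with z' hz'
      rw [← hFTC z' hz' a w (fun t ht => hball (hseg a w r hw t ht))]
      ring
    have hz₀S : z₀ ∈ S := by
      refine ⟨hz₀, fun z'₀ _ => ?_⟩
      have : (fun z' : Fin p → ℂ => Hf z' z₀ - Hf z' z₀) = fun _ => 0 := by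
        funext z'; exact sub_self _
      rw [this]
      exact differentiableAt_const 0
    have hSopen : IsOpen S := by
      rw [Metric.isOpen_iff]
      intro a haS
      obtain ⟨r, hr, hball⟩ := Metric.isOpen_iff.mp hΩo a haS.1
      exact ⟨r, hr, hstep a haS r hball⟩
    have hTopen : IsOpen (Ω \ S) := by
      rw [Metric.isOpen_iff]
      intro a ⟨haΩ, haS⟩
      obtain ⟨r, hr, hball⟩ := Metric.isOpen_iff.mp hΩo a haΩ
      refine ⟨r / 2, by linarith, fun w hw => ?_⟩
      have hwΩ : w ∈ Ω := hball (ball_subset_ball (by linarith) hw)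
      refine ⟨hwΩ, fun hwS => ?_⟩
      have hball2 : ball w (r / 2) ⊆ Ω := by
        refine subset_trans (ball_subset_ball' ?_) hball
        rw [mem_ball] at hw
        linarith
      have haw : a ∈ ball w (r / 2) := by
        rw [mem_ball, dist_comm]
        exact hw
      exact haS (hstep w hwS (r / 2) hball2 haw)
    have hΩS : Ω ⊆ S := by
      by_contra hcon
      rw [Set.not_subset] at hcon
      obtain ⟨w₀, hw₀Ω, hw₀S⟩ := hcon
      obtain ⟨x, hxΩ, hxS, hxT⟩ := hΩc.isPreconnected S (Ω \ S) hSopen hTopen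
        (fun w hw => (em (w ∈ S)).elim Or.inl (fun h => Or.inr ⟨hw, h⟩))
        ⟨z₀, hz₀, hz₀S⟩ ⟨w₀, hw₀Ω, ⟨hw₀Ω, hw₀S⟩⟩
      exact hxT.2 hxS
    -- final construction
    refine ⟨fun q => Hf q.1 q.2 - Hf q.1 z₀, ?_, ?_⟩
    · intro q hq
      obtain ⟨hq1, hq2⟩ := hq
      refine DifferentiableAt.differentiableWithinAt ?_
      obtain ⟨r, hr, hball⟩ := Metric.isOpen_iff.mp hΩo q.2 hq2
      have hG : DifferentiableAt ℂ (fun z' => Hf z' q.2 - Hf z' z₀) q.1 :=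
        (hΩS hq2).2 q.1 hq1
      have hpart1 : DifferentiableAt ℂ
          (fun q' : (Fin p → ℂ) × ℂ => Hf q'.1 q.2 - Hf q'.1 z₀) q := by
        have := hG.comp q differentiableAt_fst
        simpa [Function.comp_def] using this
      have hpart2 : DifferentiableAt ℂ
          (fun q' : (Fin p → ℂ) × ℂ =>
            (q'.2 - q.2) * ∫ t in (0 : ℝ)..1, v (q'.1, q.2 + (t : ℂ) * (q'.2 - q.2))) q := by
        have h2 := hV2 q.2 r hball q.1 hq1 q.2 (mem_ball_self hr)
        exact (differentiableAt_snd.sub (differentiableAt_const _)).mul h2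
      refine (hpart1.add hpart2).congr_of_eventuallyEq ?_
      have hnb : D ×ˢ ball q.2 r ∈ 𝓝 q :=
        (hDo.prod isOpen_ball).mem_nhds ⟨hq1, mem_ball_self hr⟩
      filter_upwards [hnb] with q' hq'
      simp only [Pi.add_apply]
      rw [← hFTC q'.1 hq'.1 q.2 q'.2 (fun t ht => hball (hseg q.2 q'.2 r hq'.2 t ht))]
      ring
    · intro z' hz' w hw
      have hder := ((hHf z' hz').2 w hw).sub_const (Hf z' z₀)
      exact hder
end
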